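/- For each m ≥ 1, the flat CTL formula φ_m := AG(σ_p ∧ σ_q) ∧ ⋀_{i=1}^m EG(r ∨ pᵢ) ∧ ⋀_{j=1}^m AF(qⱼ ∧ ¬r) is satisfiable, has length O(m), and every serial model of φ_m has at least m² worlds and extent at least m. -/

import Mathlib

def Serial {W : Type} (R : W → W → Prop) : Prop := ∀ w, ∃ u, R w u

def IsPath {W : Type} (R : W → W → Prop) (π : ℕ → W) : Prop := ∀ i, R (π i) (π (i+1))

structure Kripke (W : Type) where
  R : W → W → Prop
  V : ℕ → W → Prop

inductive CTL where
  | atom : ℕ → CTL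
  | neg  : CTL → CTL
  | and  : CTL → CTL → CTL
  | or   : CTL → CTL → CTL
  | AX : CTL → CTL
  | EX : CTL → CTL
  | AF : CTL → CTL
  | EF : CTL → CTL
  | AG : CTL → CTL
  | EG : CTL → CTL
  | AU : CTL → CTL → CTL
  | EU : CTL → CTL → CTL
  | AR : CTL → CTL → CTL
  | ER : CTL → CTL → CTL
deriving DecidableEq

def sat {W : Type} (K : Kripke W) : CTL → W → Prop
  | .atom p, w => K.V p w
  | .neg φ, w => ¬ sat K φ w
  | .and φ ψ, w => sat K φ w ∧ sat K ψ w
  | .or φ ψ, w => sat K φ w ∨ sat K ψ w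
  | .AX φ, w => ∀ π : ℕ → W, IsPath K.R π → π 0 = w → sat K φ (π 1)
  | .EX φ, w => ∃ π : ℕ → W, IsPath K.R π ∧ π 0 = w ∧ sat K φ (π 1)
  | .AF φ, w => ∀ π : ℕ → W, IsPath K.R π → π 0 = w → ∃ i, sat K φ (π i)
  | .EF φ, w => ∃ π : ℕ → W, IsPath K.R π ∧ π 0 = w ∧ ∃ i, sat K φ (π i)
  | .AG φ, w => ∀ π : ℕ → W, IsPath K.R π → π 0 = w → ∀ i, sat K φ (π i)
  | .EG φ, w => ∃ π : ℕ → W, IsPath K.R π ∧ π 0 = w ∧ ∀ i, sat K φ (π i)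
  | .AU φ ψ, w => ∀ π : ℕ → W, IsPath K.R π → π 0 = w →
      ∃ i, sat K ψ (π i) ∧ ∀ j, j < i → sat K φ (π j)
  | .EU φ ψ, w => ∃ π : ℕ → W, IsPath K.R π ∧ π 0 = w ∧
      ∃ i, sat K ψ (π i) ∧ ∀ j, j < i → sat K φ (π j)
  | .AR φ ψ, w => ∀ π : ℕ → W, IsPath K.R π → π 0 = w →
      ∀ i, sat K ψ (π i) ∨ ∃ j, j < i ∧ sat K φ (π j)
  | .ER φ ψ, w => ∃ π : ℕ → W, IsPath K.R π ∧ π 0 = w ∧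
      ∀ i, sat K ψ (π i) ∨ ∃ j, j < i ∧ sat K φ (π j)

def CTL.len : CTL → ℕ
  | .atom _ => 1
  | .neg φ => φ.len + 1
  | .and φ ψ => φ.len + ψ.len + 1
  | .or φ ψ => φ.len + ψ.len + 1
  | .AX φ => φ.len + 1
  | .EX φ => φ.len + 1
  | .AF φ => φ.len + 1
  | .EF φ => φ.len + 1
  | .AG φ => φ.len + 1
  | .EG φ => φ.len + 1
  | .AU φ ψ => φ.len + ψ.len + 1
  | .EU φ ψ => φ.len + ψ.len + 1
  | .AR φ ψ => φ.len + ψ.len + 1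
  | .ER φ ψ => φ.len + ψ.len + 1

def CTL.td : CTL → ℕ
  | .atom _ => 0
  | .neg φ => φ.td
  | .and φ ψ => max φ.td ψ.td
  | .or φ ψ => max φ.td ψ.td
  | .AX φ => φ.td + 1
  | .EX φ => φ.td + 1
  | .AF φ => φ.td + 1
  | .EF φ => φ.td + 1
  | .AG φ => φ.td + 1
  | .EG φ => φ.td + 1
  | .AU φ ψ => max φ.td ψ.td + 1
  | .EU φ ψ => max φ.td ψ.td + 1
  | .AR φ ψ => max φ.td ψ.td + 1
  | .ER φ ψ => max φ.td ψ.td + 1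

/-- The formula uses only the temporal operators `AG`, `EG`, `AF` and `EF`
(i.e. `T` contains `{AG, AF}` together with the duals). -/
def OnlyGF : CTL → Prop
  | .atom _ => True
  | .neg φ => OnlyGF φ
  | .and φ ψ => OnlyGF φ ∧ OnlyGF ψ
  | .or φ ψ => OnlyGF φ ∧ OnlyGF ψ
  | .AG φ => OnlyGF φ
  | .EG φ => OnlyGF φ
  | .AF φ => OnlyGF φ
  | .EF φ => OnlyGF φ
  | _ => False


/-! ### Auxiliary machinery -/

def Ftrue : CTL := CTL.or (.atom 0) (.neg (.atom 0))

def conj (l : List CTL) : CTL := l.foldr CTL.and Ftrue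

def fimpl (a b : CTL) : CTL := .or (.neg a) b

def listA (pb cb m : ℕ) : List CTL :=
  (List.range m).map fun k => fimpl (.atom (pb+k)) (.atom (cb+k))

def listB (pb cb m : ℕ) : List CTL :=
  (List.range (m-1)).map fun k =>
    .and (fimpl (.atom (cb+k)) (.atom (cb+(k+1))))
         (.neg (.and (.atom (cb+k)) (.atom (pb+(k+1)))))

def sigma' (pb cb m : ℕ) : CTL := conj (listA pb cb m ++ listB pb cb m)

def phi (m : ℕ) : CTL := conj (
  [.atom 0, .AG (sigma' 1 (1+2*m) m), .AG (sigma' (1+m) (1+3*m) m)]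
  ++ (List.range m).map (fun i => .EG (.or (.atom 0) (.atom (1+i))))
  ++ (List.range m).map (fun j => .AF (.and (.atom (1+m+j)) (.neg (.atom 0)))))

lemma sat_conj {W : Type} (K : Kripke W) (l : List CTL) (w : W) :
    sat K (conj l) w ↔ ∀ ψ ∈ l, sat K ψ w := by
  induction l with
  | nil => simp [conj, Ftrue, sat]; tauto
  | cons a l ih =>
      simp only [conj, List.foldr] at *
      simp only [sat, ih, List.mem_cons]
      constructor
      · rintro ⟨h1, h2⟩ ψ (rfl | hψ)
        · exact h1
        · exact h2 _ hψ
      · intro h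
        exact ⟨h _ (Or.inl rfl), fun ψ hψ => h _ (Or.inr hψ)⟩

lemma onlyGF_conj (l : List CTL) (h : ∀ ψ ∈ l, OnlyGF ψ) : OnlyGF (conj l) := by
  induction l with
  | nil => simp [conj, Ftrue, OnlyGF]
  | cons a l ih =>
      refine ⟨h _ List.mem_cons_self, ih fun ψ hψ => h _ (List.mem_cons_of_mem _ hψ)⟩

lemma td_conj (l : List CTL) (n : ℕ) (h : ∀ ψ ∈ l, ψ.td ≤ n) : (conj l).td ≤ n := by
  induction l with
  | nil => simp [conj, Ftrue, CTL.td]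
  | cons a l ih =>
      simp only [conj, List.foldr, CTL.td, max_le_iff]
      exact ⟨h _ List.mem_cons_self, ih fun ψ hψ => h _ (List.mem_cons_of_mem _ hψ)⟩

lemma len_conj (l : List CTL) : (conj l).len = (l.map CTL.len).sum + l.length + 4 := by
  induction l with
  | nil => simp [conj, Ftrue, CTL.len]
  | cons a l ih =>
      simp only [conj, List.foldr, CTL.len, List.map_cons, List.sum_cons, List.length_cons] at *
      omega

lemma sum_le_of_forall_le (l : List CTL) (c : ℕ) (h : ∀ ψ ∈ l, ψ.len ≤ c) :
    (l.map CTL.len).sum ≤ c * l.length := by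
  induction l with
  | nil => simp
  | cons a l ih =>
      simp only [List.map_cons, List.sum_cons, List.length_cons]
      have := ih fun ψ hψ => h _ (List.mem_cons_of_mem _ hψ)
      have := h _ List.mem_cons_self
      nlinarith

/-- at-most-one lemma -/
lemma amo {W : Type} (K : Kripke W) (v : W) (pb cb m : ℕ)
    (h : sat K (sigma' pb cb m) v) {i i' : ℕ} (hi : i < m) (hi' : i' < m)
    (hp : K.V (pb+i) v) (hp' : K.V (pb+i') v) : i = i' := by
  rw [sigma', sat_conj] at h
  have hA : ∀ k, k < m → K.V (pb+k) v → K.V (cb+k) v := by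
    intro k hk hpk
    have := h _ (by
      apply List.mem_append_left
      exact List.mem_map.2 ⟨k, List.mem_range.2 hk, rfl⟩)
    simp only [fimpl, sat] at this
    tauto
  have hB : ∀ k, k < m - 1 →
      ((K.V (cb+k) v → K.V (cb+(k+1)) v) ∧ ¬(K.V (cb+k) v ∧ K.V (pb+(k+1)) v)) := by
    intro k hk
    have := h _ (by
      apply List.mem_append_right
      exact List.mem_map.2 ⟨k, List.mem_range.2 hk, rfl⟩)
    simp only [fimpl, sat] at this
    tauto
  -- main argument for i < i'
  have main : ∀ a b : ℕ, a < b → b < m → K.V (pb+a) v → K.V (pb+b) v → False := by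
    intro a b hab hbm hpa hpb
    have hchain : ∀ k, a ≤ k → k < b → K.V (cb+k) v := by
      intro k hak
      induction k, hak using Nat.le_induction with
      | base => intro _; exact hA a (lt_trans hab hbm) hpa
      | succ k hk ih =>
          intro hkb
          have h1 : k < b := by omega
          exact (hB k (by omega)).1 (ih h1)
    have hc : K.V (cb+(b-1)) v := hchain (b-1) (by omega) (by omega)
    have := (hB (b-1) (by omega)).2
    have hb1 : b - 1 + 1 = b := by omega
    rw [hb1] at this
    exact this ⟨hc, hpb⟩
  rcases lt_trichotomy i i' with h1 | h1 | h1
  · exact absurd (main i i' h1 hi' hp hp') not_false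
  · exact h1
  · exact absurd (main i' i h1 hi hp' hp) not_false


/-! ### The canonical model -/

def nxt (m j : ℕ) : ℕ := min (j+1) (m-1)

def V0 (m n : ℕ) : Option (ℕ × ℕ) → Prop
  | none => n = 0
  | some ij => (ij.1 < m ∧ n = 1+ij.1) ∨ (ij.2 < m ∧ n = 1+m+ij.2) ∨
      (∃ k, ij.1 ≤ k ∧ k < m ∧ n = 1+2*m+k) ∨ (∃ k, ij.2 ≤ k ∧ k < m ∧ n = 1+3*m+k)

def R0 (m : ℕ) : Option (ℕ × ℕ) → Option (ℕ × ℕ) → Prop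
  | none, b => ∃ i, i < m ∧ b = some (i, 0)
  | some ij, b => b = some (ij.1, nxt m ij.2)

def K0 (m : ℕ) : Kripke (Option (ℕ × ℕ)) := ⟨R0 m, V0 m⟩

lemma V0_p {m k i j : ℕ} (hk : k < m) : V0 m (1+k) (some (i,j)) ↔ i = k ∧ i < m := by
  constructor
  · rintro (⟨h1,h2⟩|⟨h1,h2⟩|⟨k',h1,h2,h3⟩|⟨k',h1,h2,h3⟩) <;> omega
  · rintro ⟨rfl, h⟩; exact Or.inl ⟨h, rfl⟩

lemma V0_q {m k i j : ℕ} (hk : k < m) : V0 m (1+m+k) (some (i,j)) ↔ j = k ∧ j < m := by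
  constructor
  · rintro (⟨h1,h2⟩|⟨h1,h2⟩|⟨k',h1,h2,h3⟩|⟨k',h1,h2,h3⟩) <;> omega
  · rintro ⟨rfl, h⟩; exact Or.inr (Or.inl ⟨h, rfl⟩)

lemma V0_cp {m k i j : ℕ} (hk : k < m) : V0 m (1+2*m+k) (some (i,j)) ↔ i ≤ k := by
  constructor
  · rintro (⟨h1,h2⟩|⟨h1,h2⟩|⟨k',h1,h2,h3⟩|⟨k',h1,h2,h3⟩) <;> omega
  · intro h; exact Or.inr (Or.inr (Or.inl ⟨k, h, hk, rfl⟩))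

lemma V0_cq {m k i j : ℕ} (hk : k < m) : V0 m (1+3*m+k) (some (i,j)) ↔ j ≤ k := by
  constructor
  · rintro (⟨h1,h2⟩|⟨h1,h2⟩|⟨k',h1,h2,h3⟩|⟨k',h1,h2,h3⟩) <;> omega
  · intro h; exact Or.inr (Or.inr (Or.inr ⟨k, h, hk, rfl⟩))

lemma V0_none_elim {m n : ℕ} (h : V0 m n none) : n = 0 := h

lemma V0_r {m : ℕ} (v : Option (ℕ × ℕ)) : V0 m 0 v ↔ v = none := by
  match v with
  | none => simp [V0]
  | some ij =>
      simp only [V0]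
      constructor
      · rintro (⟨h1,h2⟩|⟨h1,h2⟩|⟨k',h1,h2,h3⟩|⟨k',h1,h2,h3⟩) <;> omega
      · intro h; exact absurd h (by simp)

lemma model_sigma_p (m : ℕ) (v : Option (ℕ × ℕ)) :
    sat (K0 m) (sigma' 1 (1+2*m) m) v := by
  rw [sigma', sat_conj]
  intro ψ hψ
  rcases List.mem_append.1 hψ with h | h
  · rcases List.mem_map.1 h with ⟨k, hk, rfl⟩
    rw [List.mem_range] at hk
    simp only [fimpl, sat]
    match v with
    | none =>
        left; intro hV
        exact absurd (V0_none_elim (m := m) hV) (by omega)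
    | some (i, j) =>
        by_cases hik : i ≤ k
        · right; exact (V0_cp hk).2 hik
        · left; intro hV
          have := (V0_p hk).1 hV
          omega
  · rcases List.mem_map.1 h with ⟨k, hk, rfl⟩
    rw [List.mem_range] at hk
    simp only [fimpl, sat]
    match v with
    | none =>
        constructor
        · left; intro hV; exact absurd (V0_none_elim (m := m) hV) (by omega)
        · rintro ⟨hV, _⟩; exact absurd (V0_none_elim (m := m) hV) (by omega)
    | some (i, j) =>
        constructor
        · by_cases hik : i ≤ k
          · right; exact (V0_cp (by omega)).2 (by omega)
          · left; intro hV; exact hik ((V0_cp (by omega)).1 hV)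
        · rintro ⟨hV1, hV2⟩
          have h1 := (V0_cp (by omega : k < m)).1 hV1
          have h2 := (V0_p (by omega : k+1 < m)).1 hV2
          omega

lemma model_sigma_q (m : ℕ) (v : Option (ℕ × ℕ)) :
    sat (K0 m) (sigma' (1+m) (1+3*m) m) v := by
  rw [sigma', sat_conj]
  intro ψ hψ
  rcases List.mem_append.1 hψ with h | h
  · rcases List.mem_map.1 h with ⟨k, hk, rfl⟩
    rw [List.mem_range] at hk
    simp only [fimpl, sat]
    match v with
    | none =>
        left; intro hV
        exact absurd (V0_none_elim (m := m) hV) (by omega)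
    | some (i, j) =>
        by_cases hjk : j ≤ k
        · right; exact (V0_cq hk).2 hjk
        · left; intro hV
          have := (V0_q hk).1 hV
          omega
  · rcases List.mem_map.1 h with ⟨k, hk, rfl⟩
    rw [List.mem_range] at hk
    simp only [fimpl, sat]
    match v with
    | none =>
        constructor
        · left; intro hV; exact absurd (V0_none_elim (m := m) hV) (by omega)
        · rintro ⟨hV, _⟩; exact absurd (V0_none_elim (m := m) hV) (by omega)
    | some (i, j) =>
        constructor
        · by_cases hjk : j ≤ k
          · right; exact (V0_cq (by omega)).2 (by omega)
          · left; intro hV; exact hjk ((V0_cq (by omega)).1 hV)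
        · rintro ⟨hV1, hV2⟩
          have h1 := (V0_cq (by omega : k < m)).1 hV1
          have h2 := (V0_q (by omega : k+1 < m)).1 hV2
          omega

def iterJ (m : ℕ) : ℕ → ℕ
  | 0 => 0
  | (t+1) => nxt m (iterJ m t)

lemma iterJ_eq (m : ℕ) : ∀ j, j < m → iterJ m j = j := by
  intro j
  induction j with
  | zero => intro _; rfl
  | succ k ih =>
      intro h
      have : iterJ m k = k := ih (by omega)
      simp [iterJ, this, nxt]
      omega

def path0 (m i : ℕ) : ℕ → Option (ℕ × ℕ)
  | 0 => none
  | (t+1) => some (i, iterJ m t)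

lemma path0_isPath (m i : ℕ) (hi : i < m) : IsPath (K0 m).R (path0 m i) := by
  intro t
  match t with
  | 0 => exact ⟨i, hi, rfl⟩
  | (s+1) => rfl

lemma path_shape (m : ℕ) (π : ℕ → Option (ℕ × ℕ)) (hπ : IsPath (K0 m).R π)
    (h0 : π 0 = none) : ∃ i, i < m ∧ ∀ t, π (t+1) = some (i, iterJ m t) := by
  have h1 := hπ 0
  rw [h0] at h1
  obtain ⟨i, hi, hstep⟩ := h1
  refine ⟨i, hi, ?_⟩
  intro t
  induction t with
  | zero => exact hstep
  | succ s ih =>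
      have := hπ (s+1)
      rw [ih] at this
      exact this


/-! ### Satisfiability in the canonical model -/

lemma model_sat (m : ℕ) (hm : 1 ≤ m) :
    Serial (K0 m).R ∧ sat (K0 m) (phi m) none := by
  constructor
  · intro v
    match v with
    | none => exact ⟨some (0,0), 0, by omega, rfl⟩
    | some ij => exact ⟨some (ij.1, nxt m ij.2), rfl⟩
  · rw [phi, sat_conj]
    intro ψ hψ
    simp only [List.mem_append, List.mem_cons, List.mem_map, List.mem_range,
      List.not_mem_nil, or_false] at hψ
    rcases hψ with ((rfl | rfl | rfl) | ⟨i, hi, rfl⟩) | ⟨j, hj, rfl⟩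
    · exact rfl
    · intro π hπ h0 tt; exact model_sigma_p m (π tt)
    · intro π hπ h0 tt; exact model_sigma_q m (π tt)
    · refine ⟨path0 m i, path0_isPath m i hi, rfl, ?_⟩
      intro tt
      match tt with
      | 0 => exact Or.inl rfl
      | (s+1) => exact Or.inr ((V0_p hi).2 ⟨rfl, hi⟩)
    · intro π hπ h0
      obtain ⟨i, hi, hshape⟩ := path_shape m π hπ h0
      refine ⟨j+1, ?_⟩
      rw [hshape j, iterJ_eq m j hj]
      refine ⟨(V0_q hj).2 ⟨rfl, hj⟩, ?_⟩
      intro hV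
      have := (V0_r (some (i, j))).1 hV
      simp at this

/-! ### Extraction lemmas -/

lemma phi_root {W : Type} {K : Kripke W} {w : W} {m : ℕ} (h : sat K (phi m) w) :
    K.V 0 w := by
  rw [phi, sat_conj] at h
  exact h (.atom 0) (by simp)

lemma phi_AGp {W : Type} {K : Kripke W} {w : W} {m : ℕ} (h : sat K (phi m) w) :
    ∀ π, IsPath K.R π → π 0 = w → ∀ t, sat K (sigma' 1 (1+2*m) m) (π t) := by
  rw [phi, sat_conj] at h
  exact h (.AG (sigma' 1 (1+2*m) m)) (by simp)

lemma phi_AGq {W : Type} {K : Kripke W} {w : W} {m : ℕ} (h : sat K (phi m) w) :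
    ∀ π, IsPath K.R π → π 0 = w → ∀ t, sat K (sigma' (1+m) (1+3*m) m) (π t) := by
  rw [phi, sat_conj] at h
  exact h (.AG (sigma' (1+m) (1+3*m) m)) (by simp)

lemma phi_EG {W : Type} {K : Kripke W} {w : W} {m i : ℕ} (h : sat K (phi m) w)
    (hi : i < m) :
    ∃ π, IsPath K.R π ∧ π 0 = w ∧ ∀ t, K.V 0 (π t) ∨ K.V (1+i) (π t) := by
  rw [phi, sat_conj] at h
  have := h (.EG (.or (.atom 0) (.atom (1+i))))
    (List.mem_append_left _ (List.mem_append_right _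
      (List.mem_map.2 ⟨i, List.mem_range.2 hi, rfl⟩)))
  obtain ⟨π, h1, h2, h3⟩ := this
  exact ⟨π, h1, h2, fun t => h3 t⟩

lemma phi_AF {W : Type} {K : Kripke W} {w : W} {m j : ℕ} (h : sat K (phi m) w)
    (hj : j < m) :
    ∀ π, IsPath K.R π → π 0 = w → ∃ t, K.V (1+m+j) (π t) ∧ ¬ K.V 0 (π t) := by
  rw [phi, sat_conj] at h
  have := h (.AF (.and (.atom (1+m+j)) (.neg (.atom 0))))
    (List.mem_append_right _ (List.mem_map.2 ⟨j, List.mem_range.2 hj, rfl⟩))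
  intro π hπ h0
  obtain ⟨tt, ht⟩ := this π hπ h0
  exact ⟨tt, ht.1, ht.2⟩

/-! ### Syntactic properties -/

lemma onlyGF_sigma (pb cb m : ℕ) : OnlyGF (sigma' pb cb m) := by
  apply onlyGF_conj
  intro ψ hψ
  rcases List.mem_append.1 hψ with h | h <;>
    rcases List.mem_map.1 h with ⟨k, _, rfl⟩ <;>
    first
      | exact ⟨trivial, trivial⟩
      | exact ⟨⟨trivial, trivial⟩, ⟨trivial, trivial⟩⟩

lemma td_sigma (pb cb m : ℕ) : (sigma' pb cb m).td ≤ 0 := by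
  apply td_conj
  intro ψ hψ
  rcases List.mem_append.1 hψ with h | h <;>
    rcases List.mem_map.1 h with ⟨k, _, rfl⟩ <;>
    simp [fimpl, CTL.td]

lemma len_sigma (pb cb m : ℕ) : (sigma' pb cb m).len ≤ 15*m + 4 := by
  rw [sigma', len_conj]
  have hA := sum_le_of_forall_le (listA pb cb m) 4 (by
    intro ψ hψ
    rcases List.mem_map.1 hψ with ⟨k, _, rfl⟩
    exact le_of_eq rfl)
  have hB := sum_le_of_forall_le (listB pb cb m) 9 (by
    intro ψ hψ
    rcases List.mem_map.1 hψ with ⟨k, _, rfl⟩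
    exact le_of_eq rfl)
  have hlA : (listA pb cb m).length = m := by simp [listA]
  have hlB : (listB pb cb m).length = m - 1 := by simp [listB]
  rw [List.map_append, List.sum_append, List.length_append]
  omega

lemma len_phi (m : ℕ) (hm : 1 ≤ m) : (phi m).len ≤ 100 * m := by
  rw [phi, len_conj]
  have h1 := len_sigma 1 (1+2*m) m
  have h2 := len_sigma (1+m) (1+3*m) m
  have hEG := sum_le_of_forall_le ((List.range m).map
      (fun i => CTL.EG (.or (.atom 0) (.atom (1+i))))) 4 (by
    intro ψ hψ
    rcases List.mem_map.1 hψ with ⟨k, _, rfl⟩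
    exact le_of_eq rfl)
  have hAF := sum_le_of_forall_le ((List.range m).map
      (fun j => CTL.AF (.and (.atom (1+m+j)) (.neg (.atom 0))))) 5 (by
    intro ψ hψ
    rcases List.mem_map.1 hψ with ⟨k, _, rfl⟩
    exact le_of_eq rfl)
  simp only [List.map_append, List.sum_append, List.length_append, List.length_map,
    List.length_range, List.map_cons, List.sum_cons, List.map_nil, List.sum_nil,
    List.length_cons, List.length_nil, CTL.len] at *
  omega

/-- For each `m ≥ 1` there is a satisfiable flat CTL formula over `{AG, EG, AF}` of
length `O(m)` (the formula `AG(σ_p ∧ σ_q) ∧ ⋀ᵢ EG(r ∨ pᵢ) ∧ ⋀ⱼ AF(qⱼ ∧ ¬r)`)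
such that every rooted serial model has at least `m²` worlds and extent at least `m`
(some path visits at least `m + 1` distinct worlds). -/
theorem flat_AG_EG_AF_quadratic_lower_bound :
    ∃ C : ℕ, 0 < C ∧ ∀ m : ℕ, 1 ≤ m → ∃ φ : CTL,
      OnlyGF φ ∧ φ.td ≤ 1 ∧ φ.len ≤ C * m ∧
      (∃ (W : Type) (K : Kripke W) (w : W), Serial K.R ∧ sat K φ w) ∧
      (∀ (W : Type) (inst : Fintype W) (K : Kripke W) (w : W),
        Serial K.R → sat K φ w → m ^ 2 ≤ @Fintype.card W inst) ∧
      (∀ (W : Type) (K : Kripke W) (w : W), Serial K.R → sat K φ w →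
        ∃ π : ℕ → W, IsPath K.R π ∧ π 0 = w ∧
          ∃ f : Fin (m + 1) → ℕ, Function.Injective (fun i => π (f i))) := by
  refine ⟨100, by norm_num, fun m hm => ⟨phi m, ?_, ?_, len_phi m hm, ?_, ?_, ?_⟩⟩
  · -- OnlyGF
    apply onlyGF_conj
    intro ψ hψ
    simp only [List.mem_append, List.mem_cons, List.mem_map, List.mem_range,
      List.not_mem_nil, or_false] at hψ
    rcases hψ with ((rfl | rfl | rfl) | ⟨i, hi, rfl⟩) | ⟨j, hj, rfl⟩
    · trivial
    · exact onlyGF_sigma _ _ _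
    · exact onlyGF_sigma _ _ _
    · exact ⟨trivial, trivial⟩
    · exact ⟨trivial, trivial⟩
  · -- temporal depth
    apply td_conj
    intro ψ hψ
    simp only [List.mem_append, List.mem_cons, List.mem_map, List.mem_range,
      List.not_mem_nil, or_false] at hψ
    rcases hψ with ((rfl | rfl | rfl) | ⟨i, hi, rfl⟩) | ⟨j, hj, rfl⟩
    · simp [CTL.td]
    · have := td_sigma 1 (1+2*m) m; simp only [CTL.td]; omega
    · have := td_sigma (1+m) (1+3*m) m; simp only [CTL.td]; omega
    · simp [CTL.td]
    · simp [CTL.td]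
  · -- satisfiability
    obtain ⟨hser, hsat⟩ := model_sat m hm
    exact ⟨_, K0 m, none, hser, hsat⟩
  · -- m^2 lower bound
    intro W inst K w hser hsat
    have hAGp := phi_AGp hsat
    have hAGq := phi_AGq hsat
    have hEG : ∀ i : Fin m, ∃ π, IsPath K.R π ∧ π 0 = w ∧
        ∀ t, K.V 0 (π t) ∨ K.V (1+(i:ℕ)) (π t) := fun i => phi_EG hsat i.2
    choose π hπ hπ0 hπel using hEG
    have hAF : ∀ i j : Fin m, ∃ t, K.V (1+m+(j:ℕ)) (π i t) ∧ ¬ K.V 0 (π i t) :=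
      fun i j => phi_AF hsat j.2 (π i) (hπ i) (hπ0 i)
    choose t ht using hAF
    have hp : ∀ (i : Fin m) (j : Fin m), K.V (1+(i:ℕ)) (π i (t i j)) :=
      fun i j => (hπel i (t i j)).resolve_left (ht i j).2
    have hg : Function.Injective (fun x : Fin m × Fin m => π x.1 (t x.1 x.2)) := by
      rintro ⟨i, j⟩ ⟨i', j'⟩ hv
      simp only at hv
      have hσp := hAGp (π i) (hπ i) (hπ0 i) (t i j)
      have hσq := hAGq (π i) (hπ i) (hπ0 i) (t i j)
      have hpi := hp i j
      have hpi' := hp i' j'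
      rw [← hv] at hpi'
      have hqj := (ht i j).1
      have hqj' := (ht i' j').1
      rw [← hv] at hqj'
      have e1 : (i:ℕ) = (i':ℕ) := amo K _ 1 (1+2*m) m hσp i.2 i'.2 hpi hpi'
      have e2 : (j:ℕ) = (j':ℕ) := by
        have h1 : K.V ((1+m)+(j:ℕ)) (π i (t i j)) := hqj
        have h2 : K.V ((1+m)+(j':ℕ)) (π i (t i j)) := hqj'
        exact amo K _ (1+m) (1+3*m) m hσq j.2 j'.2 h1 h2
      exact Prod.ext (Fin.ext e1) (Fin.ext e2)
    calc m ^ 2 = Fintype.card (Fin m × Fin m) := by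
          rw [Fintype.card_prod, Fintype.card_fin]; ring
      _ ≤ Fintype.card W := Fintype.card_le_of_injective _ hg
  · -- extent
    intro W K w hser hsat
    have hr := phi_root hsat
    have hAGq := phi_AGq hsat
    obtain ⟨π, hπ, hπ0, hπel⟩ := phi_EG hsat (show 0 < m from hm)
    have hAF : ∀ j : Fin m, ∃ t, K.V (1+m+(j:ℕ)) (π t) ∧ ¬ K.V 0 (π t) :=
      fun j => phi_AF hsat j.2 π hπ hπ0
    choose t ht using hAF
    refine ⟨π, hπ, hπ0, fun a => if h : (a:ℕ) = 0 then 0 else t ⟨(a:ℕ)-1, by omega⟩, ?_⟩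
    intro a b hab
    simp only at hab
    by_cases ha : (a:ℕ) = 0 <;> by_cases hb : (b:ℕ) = 0
    · exact Fin.ext (by omega)
    · rw [dif_pos ha, dif_neg hb] at hab
      have hbad := (ht ⟨(b:ℕ)-1, by omega⟩).2
      rw [← hab, hπ0] at hbad
      exact absurd hr hbad
    · rw [dif_neg ha, dif_pos hb] at hab
      have hbad := (ht ⟨(a:ℕ)-1, by omega⟩).2
      rw [hab, hπ0] at hbad
      exact absurd hr hbad
    · rw [dif_neg ha, dif_neg hb] at hab
      have h1 := (ht ⟨(a:ℕ)-1, by omega⟩).1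
      have h2 := (ht ⟨(b:ℕ)-1, by omega⟩).1
      rw [hab] at h1
      have hσq := hAGq π hπ hπ0 (t ⟨(b:ℕ)-1, by omega⟩)
      have h1' : K.V ((1+m)+((a:ℕ)-1)) (π (t ⟨(b:ℕ)-1, by omega⟩)) := h1
      have h2' : K.V ((1+m)+((b:ℕ)-1)) (π (t ⟨(b:ℕ)-1, by omega⟩)) := h2
      have := amo K _ (1+m) (1+3*m) m hσq (show (a:ℕ)-1 < m by omega)
        (show (b:ℕ)-1 < m by omega) h1' h2'
      exact Fin.ext (by omega)
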